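/- For every even nonnegative integer ℓ and every real p, ∫_{−1}^{1} P_ℓ(y) · cosh(p·arcsin y)/√(1−y²) dy = (2 sinh(πp/2)/p) · ∏_{k=1}^{ℓ/2} (p² + (2k−1)²)/(p² + 4k²), where at p = 0 the factor 2 sinh(πp/2)/p is interpreted as its limit π. -/

import Mathlib

open Real Finset

/-- Legendre polynomial of degree `l`, via Rodrigues' formula. -/
noncomputable def legendreP (l : ℕ) (y : ℝ) : ℝ :=
  (1 / (2 ^ l * (Nat.factorial l : ℝ))) *
    iteratedDeriv l (fun t : ℝ => (t ^ 2 - 1) ^ l) y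

namespace LegAux
open Polynomial MeasureTheory intervalIntegral

noncomputable def U (n : ℕ) : ℝ[X] := ((X:ℝ[X])^2 - 1)^n
noncomputable def R (n : ℕ) : ℝ[X] := derivative^[n] (U n)
noncomputable def P (n : ℕ) : ℝ[X] :=
  C (1/(2^n * (Nat.factorial n : ℝ))) * R n

lemma itD_add (m : ℕ) (p q : ℝ[X]) :
    derivative^[m] (p + q) = derivative^[m] p + derivative^[m] q := by
  induction m generalizing p q with
  | zero => simp
  | succ m ih => simp [Function.iterate_succ_apply, derivative_add, ih]

lemma itD_smul (m k : ℕ) (q : ℝ[X]) :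
    derivative^[m] (k • q) = k • derivative^[m] q := by
  induction m generalizing q with
  | zero => simp
  | succ m ih => simp [Function.iterate_succ_apply, derivative_smul, ih]

lemma A1 (m : ℕ) (q : ℝ[X]) :
    derivative^[m+1] (X * q) = X * derivative^[m+1] q + (m+1) • derivative^[m] q := by
  induction m generalizing q with
  | zero => simp [derivative_mul]; ring
  | succ m ih =>
    have h : derivative (X * q) = X * derivative q + q := by
      simp [derivative_mul]; ring
    rw [Function.iterate_succ_apply, h, itD_add, ih (derivative q)]
    simp only [← Function.iterate_succ_apply derivative, Function.iterate_one,
      Function.iterate_zero, id_eq, nsmul_eq_mul]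
    push_cast
    ring

lemma hder : derivative ((X:ℝ[X])^2 - 1) = 2 * X := by
  simp [derivative_sub, map_ofNat, one_add_one_eq_two]

lemma A2 (m : ℕ) (q : ℝ[X]) :
    derivative^[m+2] (((X:ℝ[X])^2 - 1) * q) =
      ((X:ℝ[X])^2-1) * derivative^[m+2] q + (2*(m+2)) • (X * derivative^[m+1] q)
        + ((m+2)*(m+1)) • derivative^[m] q := by
  have hfirst : ∀ r : ℝ[X], derivative (((X:ℝ[X])^2 - 1) * r)
      = 2 • (X * r) + ((X:ℝ[X])^2-1) * derivative r := by
    intro r; simp [derivative_mul, hder, map_ofNat]; ring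
  induction m generalizing q with
  | zero =>
    rw [show (2:ℕ) = 1 + 1 from rfl, Function.iterate_succ_apply, hfirst, itD_add, itD_smul,
      A1 0]
    simp only [hfirst, Function.iterate_succ_apply', Function.iterate_zero, id_eq,
      nsmul_eq_mul]
    push_cast; ring
  | succ m ih =>
    rw [Function.iterate_succ_apply, hfirst, itD_add, itD_smul, A1 (m+1), ih (derivative q)]
    simp only [← Function.iterate_succ_apply derivative, Function.iterate_one,
      Function.iterate_zero, id_eq, nsmul_eq_mul]
    push_cast; ring

lemma hu (n : ℕ) : derivative (U (n+1)) = (2*(n+1)) • (X * U n) := by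
  unfold U
  rw [derivative_pow]
  simp only [hder, nsmul_eq_mul, map_add, map_one, C_eq_natCast]
  push_cast
  ring

lemma I1R (n : ℕ) : derivative (R (n+1)) =
    (2*(n+1)) • (X * derivative (R n) + (n+1) • R n) := by
  unfold R
  rw [← Function.iterate_succ_apply' derivative (n+1), Function.iterate_succ_apply, hu,
    itD_smul, A1 n, ← Function.iterate_succ_apply' derivative n]

lemma I5R (n : ℕ) : R (n+1) = 2 * (((X:ℝ[X])^2-1) * derivative (R n))
    + (2*(n+1)) • (X * R n) := by
  cases n with
  | zero =>
    simp only [R, U, pow_one, pow_zero, Function.iterate_one, Function.iterate_zero, id_eq,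
      hder, derivative_one, mul_zero, zero_add, nsmul_eq_mul]
    push_cast; ring
  | succ m =>
    have hdR : derivative (R (m+1)) = derivative^[m+2] (U (m+1)) :=
      (Function.iterate_succ_apply' derivative (m+1) (U (m+1))).symm
    have h1 : R (m+2) = (2*(m+2)) • (X * R (m+1) + (m+1) • derivative^[m] (U (m+1))) := by
      unfold R
      rw [Function.iterate_succ_apply, hu, itD_smul, A1 m]
    have h2 : R (m+2) = ((X:ℝ[X])^2-1) * derivative (R (m+1))
        + (2*(m+2)) • (X * R (m+1)) + ((m+2)*(m+1)) • derivative^[m] (U (m+1)) := by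
      rw [hdR]
      conv_lhs => rw [R, show U (m+2) = ((X:ℝ[X])^2-1) * U (m+1) by
        rw [U, U, pow_succ']]
      exact A2 m (U (m+1))
    simp only [nsmul_eq_mul] at h1 h2 ⊢
    push_cast at h1 h2 ⊢
    linear_combination 2 * h2 - h1

lemma hc (n : ℕ) : C (1/(2^n * (Nat.factorial n : ℝ)))
    = 2*((n:ℝ[X])+1) * C (1/(2^(n+1) * (Nat.factorial (n+1) : ℝ))) := by
  have h : (1/(2^n * (Nat.factorial n : ℝ)))
      = (2*((n:ℝ)+1)) * (1/(2^(n+1) * (Nat.factorial (n+1) : ℝ))) := by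
    have h1 : (Nat.factorial n : ℝ) ≠ 0 := Nat.cast_ne_zero.2 n.factorial_ne_zero
    rw [Nat.factorial_succ]
    push_cast
    field_simp
    ring
  rw [h, map_mul, map_mul, map_ofNat, map_add, map_one, C_eq_natCast]

lemma I1P (n : ℕ) : derivative (P (n+1)) =
    X * derivative (P n) + ((n:ℝ[X])+1) * P n := by
  unfold P
  rw [derivative_C_mul, derivative_C_mul, I1R]
  simp only [nsmul_eq_mul]
  push_cast
  linear_combination -(X * derivative (R n) + ((n:ℝ[X])+1) * R n) * hc n

lemma I5P (n : ℕ) : ((X:ℝ[X])^2-1) * derivative (P n) =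
    ((n:ℝ[X])+1) * (P (n+1) - X * P n) := by
  unfold P
  rw [derivative_C_mul, I5R]
  simp only [nsmul_eq_mul]
  push_cast
  linear_combination (((X:ℝ[X])^2-1) * derivative (R n) + ((n:ℝ[X])+1) * (X * R n)) * hc n


noncomputable def pe (n : ℕ) (y : ℝ) : ℝ := (P n).eval y
noncomputable def pe1 (n : ℕ) (y : ℝ) : ℝ := (derivative (P n)).eval y
noncomputable def pe2 (n : ℕ) (y : ℝ) : ℝ := (derivative (derivative (P n))).eval y

lemma e1 (n : ℕ) (y : ℝ) : pe1 (n+1) y = y * pe1 n y + ((n:ℝ)+1) * pe n y := by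
  have h := congrArg (eval y) (I1P n)
  simpa [pe, pe1, eval_mul, eval_add] using h

lemma e5 (n : ℕ) (y : ℝ) :
    (y^2-1) * pe1 n y = ((n:ℝ)+1) * (pe (n+1) y - y * pe n y) := by
  have h := congrArg (eval y) (I5P n)
  simpa [pe, pe1, eval_mul, eval_add, eval_sub, eval_pow] using h

lemma ode (n : ℕ) (y : ℝ) :
    (1-y^2) * pe2 n y = 2*y*pe1 n y - (n:ℝ)*((n:ℝ)+1) * pe n y := by
  have h := congrArg (eval y) (congrArg derivative (I5P n))
  simp only [derivative_mul, derivative_sub, hder, derivative_natCast, derivative_one,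
    derivative_X, derivative_X_pow, derivative_add, eval_add, eval_mul, eval_sub, eval_pow, eval_X, eval_one,
    eval_natCast, eval_C, pow_one, mul_one, mul_zero, zero_add, add_zero, zero_mul, eval_zero,
    eval_ofNat, map_ofNat] at h
  have h1 := e1 n y
  unfold pe pe1 pe2 at *
  linear_combination -h - ((n:ℝ)+1) * h1

lemma i4 (n : ℕ) (y : ℝ) :
    (2*(n:ℝ)+3) * ((1 - y^2) * pe1 (n+1) y) =
      ((n:ℝ)+1)*((n:ℝ)+2) * (pe n y - pe (n+2) y) := by
  linear_combination (norm := (push_cast; ring1)) (-((n:ℝ)+1)) * e5 (n+1) y - ((n:ℝ)+2)*(y^2-1) * e1 n y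
    - ((n:ℝ)+2)*y * e5 n y

lemma i3 (n : ℕ) (y : ℝ) :
    (2*(n:ℝ)+3) * (y * pe (n+1) y) = ((n:ℝ)+2) * pe (n+2) y + ((n:ℝ)+1) * pe n y := by
  linear_combination (norm := (push_cast; ring1)) e5 (n+1) y - (y^2-1) * e1 n y - y * e5 n y

lemma contPe (n : ℕ) : Continuous (pe n) := (P n).continuous
lemma contPe1 (n : ℕ) : Continuous (pe1 n) := (derivative (P n)).continuous
lemma contPe2 (n : ℕ) : Continuous (pe2 n) := (derivative (derivative (P n))).continuous
lemma hd_pe (n : ℕ) (x : ℝ) : HasDerivAt (pe n) (pe1 n x) x := (P n).hasDerivAt x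
lemma hd_pe1 (n : ℕ) (x : ℝ) : HasDerivAt (pe1 n) (pe2 n x) x :=
  (derivative (P n)).hasDerivAt x

lemma pe_zero (y : ℝ) : pe 0 y = 1 := by
  simp [pe, P, R, U]

lemma itDeriv_poly (n : ℕ) (q : ℝ[X]) :
    iteratedDeriv n (fun t => q.eval t) = fun y => (derivative^[n] q).eval y := by
  induction n generalizing q with
  | zero => simp
  | succ n ih =>
    rw [iteratedDeriv_succ',
      show deriv (fun t => q.eval t) = fun t => (derivative q).eval t from
        funext fun t => Polynomial.deriv (p := q), ih (derivative q)]
    funext y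
    rw [← Function.iterate_succ_apply]

lemma legendreP_eq (n : ℕ) (y : ℝ) : legendreP n y = pe n y := by
  unfold legendreP pe P R U
  rw [show (fun t : ℝ => (t^2-1)^n) = (fun t => ((((X:ℝ[X])^2-1))^n).eval t) by
    funext t; simp]
  rw [itDeriv_poly]
  simp [eval_mul]

noncomputable def J (p : ℝ) (n : ℕ) : ℝ :=
  ∫ θ in (-(π/2))..(π/2), pe n (sin θ) * Real.cosh (p*θ)
noncomputable def Ct (p : ℝ) (n : ℕ) : ℝ :=
  ∫ θ in (-(π/2))..(π/2), cos θ * pe n (sin θ) * Real.sinh (p*θ)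
noncomputable def Dt (p : ℝ) (n : ℕ) : ℝ :=
  ∫ θ in (-(π/2))..(π/2), sin θ * pe n (sin θ) * Real.cosh (p*θ)

lemma hd_sin_pe (n : ℕ) (θ : ℝ) :
    HasDerivAt (fun t => pe n (sin t)) (cos θ * pe1 n (sin θ)) θ := by
  have h := (hd_pe n (sin θ)).comp θ (Real.hasDerivAt_sin θ)
  simpa [Function.comp_def, mul_comm] using h

lemma hd_sin_pe1 (n : ℕ) (θ : ℝ) :
    HasDerivAt (fun t => pe1 n (sin t)) (cos θ * pe2 n (sin θ)) θ := by
  have h := (hd_pe1 n (sin θ)).comp θ (Real.hasDerivAt_sin θ)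
  simpa [Function.comp_def, mul_comm] using h

lemma hd_cosh (p θ : ℝ) : HasDerivAt (fun t => Real.cosh (p*t)) (p * Real.sinh (p*θ)) θ := by
  have h := (Real.hasDerivAt_cosh (p*θ)).comp θ ((hasDerivAt_id θ).const_mul p)
  simpa [Function.comp_def, mul_comm] using h

lemma hd_sinh (p θ : ℝ) : HasDerivAt (fun t => Real.sinh (p*t)) (p * Real.cosh (p*θ)) θ := by
  have h := (Real.hasDerivAt_sinh (p*θ)).comp θ ((hasDerivAt_id θ).const_mul p)
  simpa [Function.comp_def, mul_comm] using h

lemma contSinPe (n : ℕ) : Continuous fun θ : ℝ => pe n (sin θ) :=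
  (contPe n).comp Real.continuous_sin
lemma contSinPe1 (n : ℕ) : Continuous fun θ : ℝ => pe1 n (sin θ) :=
  (contPe1 n).comp Real.continuous_sin
lemma contCosh (p : ℝ) : Continuous fun θ : ℝ => Real.cosh (p*θ) :=
  Real.continuous_cosh.comp (continuous_const.mul continuous_id)
lemma contSinh (p : ℝ) : Continuous fun θ : ℝ => Real.sinh (p*θ) :=
  Real.continuous_sinh.comp (continuous_const.mul continuous_id)

lemma key_comb (a b c d : ℝ) (f g : ℝ → ℝ) (hf : Continuous f) (hg : Continuous g) :
    (∫ x in a..b, (c * f x + d * g x)) =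
      c * (∫ x in a..b, f x) + d * ∫ x in a..b, g x := by
  rw [integral_add (f := fun x => c * f x) (g := fun x => d * g x) ((continuous_const.mul hf).intervalIntegrable _ _)
    ((continuous_const.mul hg).intervalIntegrable _ _), intervalIntegral.integral_const_mul, intervalIntegral.integral_const_mul]

lemma key_comb3 (a b c d e : ℝ) (f g h : ℝ → ℝ) (hf : Continuous f) (hg : Continuous g)
    (hh : Continuous h) :
    (∫ x in a..b, (c * f x + (d * g x + e * h x))) =
      c * (∫ x in a..b, f x) + (d * (∫ x in a..b, g x) + e * ∫ x in a..b, h x) := by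
  rw [integral_add (f := fun x => c * f x) (g := fun x => d * g x + e * h x) ((continuous_const.mul hf).intervalIntegrable _ _)
    (((continuous_const.mul hg).add (continuous_const.mul hh)).intervalIntegrable _ _), intervalIntegral.integral_const_mul,
    key_comb a b d e g h hg hh]

lemma E3 (p : ℝ) (n : ℕ) :
    (2*(n:ℝ)+3) * Dt p (n+1) = ((n:ℝ)+2) * J p (n+2) + ((n:ℝ)+1) * J p n := by
  have hpull : (∫ θ in (-(π/2))..(π/2),
      (2*(n:ℝ)+3) * (sin θ * pe (n+1) (sin θ) * Real.cosh (p*θ))) = (2*(n:ℝ)+3) * Dt p (n+1) :=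
    integral_const_mul _ _
  have hsplit : (∫ θ in (-(π/2))..(π/2),
      (2*(n:ℝ)+3) * (sin θ * pe (n+1) (sin θ) * Real.cosh (p*θ))) =
      ((n:ℝ)+2) * J p (n+2) + ((n:ℝ)+1) * J p n := by
    rw [show J p (n+2) = ∫ θ in (-(π/2))..(π/2), pe (n+2) (sin θ) * Real.cosh (p*θ) from rfl,
      show J p n = ∫ θ in (-(π/2))..(π/2), pe n (sin θ) * Real.cosh (p*θ) from rfl,
      ← key_comb _ _ _ _ (fun θ => pe (n+2) (sin θ) * Real.cosh (p*θ))
          (fun θ => pe n (sin θ) * Real.cosh (p*θ)) ((contSinPe (n+2)).mul (contCosh p))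
        ((contSinPe n).mul (contCosh p))]
    apply integral_congr
    intro θ _
    dsimp only
    linear_combination Real.cosh (p*θ) * i3 n (sin θ)
  rw [← hpull, hsplit]

lemma E2 (p : ℝ) (n : ℕ) :
    -((2*(n:ℝ)+3) * (p * Ct p (n+1))) =
      -((2*(n:ℝ)+3) * Dt p (n+1)) + ((n:ℝ)+1)*((n:ℝ)+2) * (J p n - J p (n+2)) := by
  have hibp := integral_mul_deriv_eq_deriv_mul
    (u := fun θ => Real.cosh (p*θ)) (u' := fun θ => p * Real.sinh (p*θ))
    (v := fun θ => cos θ * pe (n+1) (sin θ))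
    (v' := fun θ => -sin θ * pe (n+1) (sin θ) + cos θ * (cos θ * pe1 (n+1) (sin θ)))
    (a := -(π/2)) (b := π/2)
    (fun θ _ => hd_cosh p θ)
    (fun θ _ => (Real.hasDerivAt_cos θ).mul (hd_sin_pe (n+1) θ))
    ((continuous_const.mul (contSinh p)).intervalIntegrable _ _)
    (((continuous_sin.neg.mul (contSinPe (n+1))).add
      (continuous_cos.mul (continuous_cos.mul (contSinPe1 (n+1))))).intervalIntegrable _ _)
  simp only [cos_pi_div_two, cos_neg, zero_mul, mul_zero, sub_zero, zero_sub] at hibp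
  have hR : (∫ θ in (-(π/2))..(π/2),
      p * Real.sinh (p*θ) * (cos θ * pe (n+1) (sin θ))) = p * Ct p (n+1) := by
    rw [show Ct p (n+1) = ∫ θ in (-(π/2))..(π/2),
        cos θ * pe (n+1) (sin θ) * Real.sinh (p*θ) from rfl, ← intervalIntegral.integral_const_mul]
    apply integral_congr
    intro θ _
    dsimp only
    ring
  have hpull : (∫ θ in (-(π/2))..(π/2), (2*(n:ℝ)+3) * (Real.cosh (p*θ) *
      (-sin θ * pe (n+1) (sin θ) + cos θ * (cos θ * pe1 (n+1) (sin θ))))) =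
      (2*(n:ℝ)+3) * ∫ θ in (-(π/2))..(π/2), Real.cosh (p*θ) *
      (-sin θ * pe (n+1) (sin θ) + cos θ * (cos θ * pe1 (n+1) (sin θ))) :=
    integral_const_mul _ _
  have hsplit : (∫ θ in (-(π/2))..(π/2), (2*(n:ℝ)+3) * (Real.cosh (p*θ) *
      (-sin θ * pe (n+1) (sin θ) + cos θ * (cos θ * pe1 (n+1) (sin θ))))) =
      (-(2*(n:ℝ)+3)) * Dt p (n+1) +
        (((n:ℝ)+1)*((n:ℝ)+2) * J p n + (-(((n:ℝ)+1)*((n:ℝ)+2))) * J p (n+2)) := by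
    rw [show Dt p (n+1) = ∫ θ in (-(π/2))..(π/2),
        sin θ * pe (n+1) (sin θ) * Real.cosh (p*θ) from rfl,
      show J p n = ∫ θ in (-(π/2))..(π/2), pe n (sin θ) * Real.cosh (p*θ) from rfl,
      show J p (n+2) = ∫ θ in (-(π/2))..(π/2), pe (n+2) (sin θ) * Real.cosh (p*θ) from rfl,
      ← key_comb3 _ _ _ _ _ (fun θ => sin θ * pe (n+1) (sin θ) * Real.cosh (p*θ))
          (fun θ => pe n (sin θ) * Real.cosh (p*θ)) (fun θ => pe (n+2) (sin θ) * Real.cosh (p*θ))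
        ((continuous_sin.mul (contSinPe (n+1))).mul (contCosh p))
        ((contSinPe n).mul (contCosh p)) ((contSinPe (n+2)).mul (contCosh p))]
    apply integral_congr
    intro θ _
    dsimp only
    have hcs : cos θ ^ 2 = 1 - sin θ ^ 2 := Real.cos_sq' θ
    linear_combination Real.cosh (p*θ) * i4 n (sin θ) +
      (2*(n:ℝ)+3) * Real.cosh (p*θ) * pe1 (n+1) (sin θ) * hcs
  linear_combination hsplit - hpull - (2*(n:ℝ)+3) * hibp + (2*(n:ℝ)+3) * hR

lemma E1 (p : ℝ) (n : ℕ) :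
    (((n:ℝ)+1)*((n:ℝ)+2) + p^2) * Ct p (n+1) = p * Dt p (n+1) := by
  set W : ℝ := ∫ θ in (-(π/2))..(π/2),
      Real.cosh (p*θ) * (cos θ * (cos θ * pe1 (n+1) (sin θ))) with hW
  have hF1 : -((((n:ℝ)+1)*((n:ℝ)+2)) * Ct p (n+1)) = -(p * W) := by
    have hibp := integral_mul_deriv_eq_deriv_mul
      (u := fun θ => Real.sinh (p*θ)) (u' := fun θ => p * Real.cosh (p*θ))
      (v := fun θ => cos θ * (cos θ * pe1 (n+1) (sin θ)))
      (v' := fun θ => -sin θ * (cos θ * pe1 (n+1) (sin θ)) +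
        cos θ * (-sin θ * pe1 (n+1) (sin θ) + cos θ * (cos θ * pe2 (n+1) (sin θ))))
      (a := -(π/2)) (b := π/2)
      (fun θ _ => hd_sinh p θ)
      (fun θ _ => (Real.hasDerivAt_cos θ).mul
        ((Real.hasDerivAt_cos θ).mul (hd_sin_pe1 (n+1) θ)))
      ((continuous_const.mul (contCosh p)).intervalIntegrable _ _)
      (((continuous_sin.neg.mul (continuous_cos.mul (contSinPe1 (n+1)))).add
        (continuous_cos.mul ((continuous_sin.neg.mul (contSinPe1 (n+1))).add
          (continuous_cos.mul (continuous_cos.mul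
            ((contPe2 (n+1)).comp Real.continuous_sin)))))).intervalIntegrable _ _)
    simp only [cos_pi_div_two, cos_neg, zero_mul, mul_zero, sub_zero, zero_sub] at hibp
    have hLHS : (∫ θ in (-(π/2))..(π/2), Real.sinh (p*θ) *
        (-sin θ * (cos θ * pe1 (n+1) (sin θ)) +
          cos θ * (-sin θ * pe1 (n+1) (sin θ) + cos θ * (cos θ * pe2 (n+1) (sin θ))))) =
        (-(((n:ℝ)+1)*((n:ℝ)+2))) * Ct p (n+1) := by
      rw [show Ct p (n+1) = ∫ θ in (-(π/2))..(π/2),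
          cos θ * pe (n+1) (sin θ) * Real.sinh (p*θ) from rfl, ← intervalIntegral.integral_const_mul]
      apply integral_congr
      intro θ _
      dsimp only
      have hode := ode (n+1) (sin θ)
      have hcs : cos θ ^ 2 = 1 - sin θ ^ 2 := Real.cos_sq' θ
      push_cast at hode
      linear_combination Real.sinh (p*θ) * cos θ * pe2 (n+1) (sin θ) * hcs +
        Real.sinh (p*θ) * cos θ * hode
    have hRHS : (∫ θ in (-(π/2))..(π/2),
        p * Real.cosh (p*θ) * (cos θ * (cos θ * pe1 (n+1) (sin θ)))) = p * W := by
      rw [hW, ← intervalIntegral.integral_const_mul]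
      apply integral_congr
      intro θ _
      dsimp only
      ring
    rw [hLHS, hRHS] at hibp
    linear_combination hibp
  have hF2 : W = -(p * Ct p (n+1)) + Dt p (n+1) := by
    have hibp2 := integral_mul_deriv_eq_deriv_mul
      (u := fun θ => Real.cosh (p*θ) * cos θ)
      (u' := fun θ => p * Real.sinh (p*θ) * cos θ + Real.cosh (p*θ) * -sin θ)
      (v := fun θ => pe (n+1) (sin θ))
      (v' := fun θ => cos θ * pe1 (n+1) (sin θ))
      (a := -(π/2)) (b := π/2)
      (fun θ _ => (hd_cosh p θ).mul (Real.hasDerivAt_cos θ))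
      (fun θ _ => hd_sin_pe (n+1) θ)
      ((((continuous_const.mul (contSinh p)).mul continuous_cos).add
        ((contCosh p).mul continuous_sin.neg)).intervalIntegrable _ _)
      ((continuous_cos.mul (contSinPe1 (n+1))).intervalIntegrable _ _)
    simp only [cos_pi_div_two, cos_neg, mul_zero, zero_mul, sub_zero, zero_sub] at hibp2
    have hL2 : (∫ θ in (-(π/2))..(π/2),
        Real.cosh (p*θ) * cos θ * (cos θ * pe1 (n+1) (sin θ))) = W := by
      rw [hW]
      apply integral_congr
      intro θ _
      dsimp only
      ring
    have hR2 : (∫ θ in (-(π/2))..(π/2),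
        (p * Real.sinh (p*θ) * cos θ + Real.cosh (p*θ) * -sin θ) * pe (n+1) (sin θ)) =
        p * Ct p (n+1) + (-1) * Dt p (n+1) := by
      rw [show Ct p (n+1) = ∫ θ in (-(π/2))..(π/2),
          cos θ * pe (n+1) (sin θ) * Real.sinh (p*θ) from rfl,
        show Dt p (n+1) = ∫ θ in (-(π/2))..(π/2),
          sin θ * pe (n+1) (sin θ) * Real.cosh (p*θ) from rfl,
        ← key_comb _ _ _ _ (fun θ => cos θ * pe (n+1) (sin θ) * Real.sinh (p*θ))
            (fun θ => sin θ * pe (n+1) (sin θ) * Real.cosh (p*θ)) ((continuous_cos.mul (contSinPe (n+1))).mul (contSinh p))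
          ((continuous_sin.mul (contSinPe (n+1))).mul (contCosh p))]
      apply integral_congr
      intro θ _
      dsimp only
      ring
    rw [hL2, hR2] at hibp2
    linear_combination hibp2
  linear_combination (-1 : ℝ) * hF1 + p * hF2

lemma Jrec (p : ℝ) (n : ℕ) :
    (p^2+((n:ℝ)+1)^2) * J p n = (p^2+((n:ℝ)+2)^2) * J p (n+2) := by
  have h1 := E1 p n
  have h2 := E2 p n
  have h3 := E3 p n
  have key : (((n:ℝ)+1)*((n:ℝ)+2)) * ((p^2+((n:ℝ)+1)^2) * J p n) =
      (((n:ℝ)+1)*((n:ℝ)+2)) * ((p^2+((n:ℝ)+2)^2) * J p (n+2)) := by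
    linear_combination (-(2*(n:ℝ)+3)*p) * h1 + (-(p^2+((n:ℝ)+1)*((n:ℝ)+2))) * h2 +
      (((n:ℝ)+1)*((n:ℝ)+2)) * h3
  have hne : (((n:ℝ)+1)*((n:ℝ)+2)) ≠ 0 := by positivity
  exact mul_left_cancel₀ hne key

lemma J0val (p : ℝ) : J p 0 = if p = 0 then π else 2 * Real.sinh (π * p / 2) / p := by
  unfold J
  simp only [pe_zero, one_mul]
  by_cases hp : p = 0
  · subst hp
    simp [Real.cosh_zero]
  · rw [if_neg hp]
    have hder : ∀ θ ∈ Set.uIcc (-(π/2)) (π/2),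
        HasDerivAt (fun t => Real.sinh (p*t) / p) (Real.cosh (p*θ)) θ := by
      intro θ _
      have h := (hd_sinh p θ).div_const p
      simpa [mul_comm, mul_div_assoc, mul_div_cancel_left₀ _ hp] using h
    rw [integral_eq_sub_of_hasDerivAt hder ((contCosh p).intervalIntegrable _ _)]
    rw [show p * (π/2) = π*p/2 by ring, show p * (-(π/2)) = -(π*p/2) by ring, Real.sinh_neg]
    ring

lemma Jclosed (p : ℝ) (k : ℕ) :
    J p (2*k) = J p 0 * ∏ j ∈ Finset.range k,
      (p^2+(2*(j:ℝ)+1)^2)/(p^2+(2*(j:ℝ)+2)^2) := by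
  induction k with
  | zero => simp
  | succ k ih =>
    rw [Finset.prod_range_succ, show 2*(k+1) = (2*k)+2 by ring]
    have hrec := Jrec p (2*k)
    push_cast at hrec
    have hne : p^2+(2*(k:ℝ)+2)^2 ≠ 0 := by positivity
    rw [← mul_assoc, ← ih]
    field_simp
    linear_combination -hrec

lemma substitution (p : ℝ) (l : ℕ) :
    (∫ y in (-1 : ℝ)..1,
        legendreP l y * Real.cosh (p * Real.arcsin y) / Real.sqrt (1 - y ^ 2)) = J p l := by
  have himg : Real.sin '' (Set.Ioo (-(π/2)) (π/2)) = Set.Ioo (-1 : ℝ) 1 := by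
    apply Set.eq_of_subset_of_subset
    · exact Set.mapsTo_iff_image_subset.1 Real.mapsTo_sin_Ioo
    · intro y hy
      exact ⟨Real.arcsin y, ⟨Real.neg_pi_div_two_lt_arcsin.2 hy.1,
        Real.arcsin_lt_pi_div_two.2 hy.2⟩, Real.sin_arcsin hy.1.le hy.2.le⟩
  rw [intervalIntegral.integral_of_le (by norm_num : (-1:ℝ) ≤ 1),
    MeasureTheory.integral_Ioc_eq_integral_Ioo, ← himg,
    MeasureTheory.integral_image_eq_integral_abs_deriv_smul measurableSet_Ioo
      (fun θ _ => (Real.hasDerivAt_sin θ).hasDerivWithinAt)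
      (Real.injOn_sin.mono Set.Ioo_subset_Icc_self) _]
  rw [J, intervalIntegral.integral_of_le (by linarith [Real.pi_pos] : -(π/2) ≤ π/2),
    MeasureTheory.integral_Ioc_eq_integral_Ioo]
  apply MeasureTheory.setIntegral_congr_fun measurableSet_Ioo
  intro θ hθ
  have hc : 0 < Real.cos θ := Real.cos_pos_of_mem_Ioo hθ
  have hs : Real.sqrt (1 - Real.sin θ^2) = Real.cos θ := by
    rw [← Real.cos_sq']; exact Real.sqrt_sq hc.le
  dsimp only
  rw [legendreP_eq, Real.arcsin_sin hθ.1.le hθ.2.le, hs, abs_of_pos hc, smul_eq_mul]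
  field_simp


end LegAux

/-- For `ℓ` even,
`∫_{-1}^1 P_ℓ(y) cosh(p arcsin y)/√(1-y²) dy
  = (2 sinh(πp/2)/p) ∏_{k=1}^{ℓ/2} (p²+(2k-1)²)/(p²+4k²)`,
where at `p = 0` the prefactor is interpreted as its limit `π`. -/
theorem legendre_cosh_arcsin_integral (l : ℕ) (hl : Even l) (p : ℝ) :
    (∫ y in (-1 : ℝ)..1, legendreP l y * Real.cosh (p * Real.arcsin y) / Real.sqrt (1 - y ^ 2)) =
      (if p = 0 then π else 2 * Real.sinh (π * p / 2) / p) *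
        ∏ k ∈ Finset.range (l / 2),
          (p ^ 2 + (2 * (k : ℝ) + 1) ^ 2) / (p ^ 2 + 4 * ((k : ℝ) + 1) ^ 2) := by
  obtain ⟨k, hk⟩ := hl
  have hl2 : l = 2*k := by omega
  subst hl2
  rw [LegAux.substitution p (2*k), LegAux.Jclosed, LegAux.J0val]
  rw [show 2*k/2 = k by omega]
  congr 1
  apply Finset.prod_congr rfl
  intro j _
  congr 1
  ring
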